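/- For the biderivation Γ₁₂ on ℝ[θ₁,θ₂,η] determined by Γ₁₂(θ₁,θ₁) = −9θ₁² − θ₂/2 + 1/2, Γ₁₂(θ₁,θ₂) = −12θ₁θ₂ + 4θ₁, Γ₁₂(θ₁,η) = −18θ₁η, Γ₁₂(θ₂,θ₂) = 48θ₁² − 16θ₂² + 24θ₂ − 8, Γ₁₂(θ₂,η) = −24θ₂η + 16η, Γ₁₂(η,η) = −54θ₁²θ₂ + 18θ₁² − 3θ₂² − 36η² + 4θ₂ − 1, the polynomial P₃ = 108θ₁⁴ + 36θ₁²θ₂ − 2θ₂³ − 20θ₁² + 5θ₂² + 4η² − 4θ₂ + 1 satisfies Γ₁₂(θ₁,P₃) = −36θ₁·P₃, Γ₁₂(θ₂,P₃) = (32 − 48θ₂)·P₃, and Γ₁₂(η,P₃) = −72η·P₃. -/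
import Mathlib


open MvPolynomial


private lemma pd01 : pderiv (0:Fin 3) (X 1 : MvPolynomial (Fin 3) ℝ) = 0 := pderiv_X_of_ne (by decide)
private lemma pd02 : pderiv (0:Fin 3) (X 2 : MvPolynomial (Fin 3) ℝ) = 0 := pderiv_X_of_ne (by decide)
private lemma pd10 : pderiv (1:Fin 3) (X 0 : MvPolynomial (Fin 3) ℝ) = 0 := pderiv_X_of_ne (by decide)
private lemma pd12 : pderiv (1:Fin 3) (X 2 : MvPolynomial (Fin 3) ℝ) = 0 := pderiv_X_of_ne (by decide)
private lemma pd20 : pderiv (2:Fin 3) (X 0 : MvPolynomial (Fin 3) ℝ) = 0 := pderiv_X_of_ne (by decide)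
private lemma pd21 : pderiv (2:Fin 3) (X 1 : MvPolynomial (Fin 3) ℝ) = 0 := pderiv_X_of_ne (by decide)
private lemma pdon (i : Fin 3) (n : ℕ) [n.AtLeastTwo] :
    pderiv i (OfNat.ofNat n : MvPolynomial (Fin 3) ℝ) = 0 := by
  rw [← map_ofNat (C : ℝ →+* MvPolynomial (Fin 3) ℝ) n, pderiv_C]

private lemma pdn2 (i : Fin 3) : pderiv i ((2:MvPolynomial (Fin 3) ℝ)) = 0 := pdon i 2
private lemma pdn4 (i : Fin 3) : pderiv i ((4:MvPolynomial (Fin 3) ℝ)) = 0 := pdon i 4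
private lemma pdn5 (i : Fin 3) : pderiv i ((5:MvPolynomial (Fin 3) ℝ)) = 0 := pdon i 5
private lemma pdn20 (i : Fin 3) : pderiv i ((20:MvPolynomial (Fin 3) ℝ)) = 0 := pdon i 20
private lemma pdn36 (i : Fin 3) : pderiv i ((36:MvPolynomial (Fin 3) ℝ)) = 0 := pdon i 36
private lemma pdn108 (i : Fin 3) : pderiv i ((108:MvPolynomial (Fin 3) ℝ)) = 0 := pdon i 108

set_option maxHeartbeats 3200000 in
/-- For the biderivation `Γ₁₂` on `ℝ[θ₁,θ₂,η]` determined by its values on generators,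
the chain rule gives `Γ₁₂(θᵢ, P₃) = ∑ⱼ Γ₁₂(θᵢ, varⱼ) ∂ⱼP₃`. -/
theorem stmt16 :
    let θ₁ : MvPolynomial (Fin 3) ℝ := X 0
    let θ₂ : MvPolynomial (Fin 3) ℝ := X 1
    let η : MvPolynomial (Fin 3) ℝ := X 2
    let g11 := -9 * θ₁ ^ 2 - C (1 / 2 : ℝ) * θ₂ + C (1 / 2 : ℝ)
    let g12 := -12 * θ₁ * θ₂ + 4 * θ₁
    let g13 := -18 * θ₁ * η
    let g22 := 48 * θ₁ ^ 2 - 16 * θ₂ ^ 2 + 24 * θ₂ - 8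
    let g23 := -24 * θ₂ * η + 16 * η
    let g33 := -54 * θ₁ ^ 2 * θ₂ + 18 * θ₁ ^ 2 - 3 * θ₂ ^ 2 - 36 * η ^ 2 + 4 * θ₂ - 1
    let P₃ : MvPolynomial (Fin 3) ℝ :=
      108 * θ₁ ^ 4 + 36 * θ₁ ^ 2 * θ₂ - 2 * θ₂ ^ 3 - 20 * θ₁ ^ 2 + 5 * θ₂ ^ 2
        + 4 * η ^ 2 - 4 * θ₂ + 1
    g11 * pderiv 0 P₃ + g12 * pderiv 1 P₃ + g13 * pderiv 2 P₃ = -36 * θ₁ * P₃ ∧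
    g12 * pderiv 0 P₃ + g22 * pderiv 1 P₃ + g23 * pderiv 2 P₃ = (32 - 48 * θ₂) * P₃ ∧
    g13 * pderiv 0 P₃ + g23 * pderiv 1 P₃ + g33 * pderiv 2 P₃ = -72 * η * P₃ := by
  have hC : (2 : MvPolynomial (Fin 3) ℝ) * C (1/2 : ℝ) = 1 := by
    rw [show (2 : MvPolynomial (Fin 3) ℝ) = C 2 from (map_ofNat C 2).symm, ← C_mul]
    norm_num
  refine ⟨?_, ?_, ?_⟩ <;>
    simp only [map_add, map_sub, pdn2, pdn4, pdn5, pdn20, pdn36, pdn108, pderiv_mul, pderiv_pow, pderiv_X_self,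
      pd01, pd02, pd10, pd12, pd20, pd21, pderiv_one, pderiv_C, map_one]
  · linear_combination ((-20 : MvPolynomial (Fin 3) ℝ) * X 0 + 56 * X 0 * X 1
      - 36 * X 0 * X 1 ^ 2 + 216 * X 0 ^ 3 - 216 * X 0 ^ 3 * X 1) * hC
  · ring
  · ring
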